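/- Let C = {C_1, …, C_k} be a k-clustering of (X, s) with k ≥ 3, such that for every pair of distinct clusters C_i, C_j there is a constant λ_{ij} with s(u,v) = λ_{ij} for all u ∈ C_i, v ∈ C_j. Suppose λ_{12} = a > b = λ_{13} and |C_3| ≥ 2. Fix x ∈ C_1, and for W > 0 let w_W be the weight function with w_W(x) = W and w_W(z) = 1 for z ≠ x. Let D_1, D_2 be any partition of C_3 into two nonempty parts, and let C' be the k-clustering {C_1 ∪ C_2, D_1, D_2, C_4, …, C_k}. Then there exists W_0 > 0 such that for all W ≥ W_0, rcut(C', w_W[X], s) < rcut(C, w_W[X], s). -/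

import Mathlib

open Finset Filter

/-- A weight function assigns a positive real weight to every point. -/
def IsWeight {X : Type*} (w : X → ℝ) : Prop := ∀ x, 0 < w x

/-- An indexed k-clustering: `k` pairwise disjoint nonempty parts covering `X`. -/
def IsClusteringI {X : Type*} {k : ℕ} (Cl : Fin k → Finset X) : Prop :=
  (∀ i, (Cl i).Nonempty) ∧ (∀ i j, i ≠ j → Disjoint (Cl i) (Cl j)) ∧
  (∀ x : X, ∃ i, x ∈ Cl i)

/-- The ratio-cut cost of an indexed clustering of weighted data `(w[X], s)`. -/
noncomputable def rcutI {X : Type*} [Fintype X] [DecidableEq X] {k : ℕ}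
    (Cl : Fin k → Finset X) (w : X → ℝ) (s : X → X → ℝ) : ℝ :=
  (1 / 2) * ∑ i, (∑ x ∈ Cl i, ∑ y ∈ (Cl i)ᶜ, s x y * w x * w y) / (∑ x ∈ Cl i, w x)

section AuxRcut
lemma wsum_mem {X : Type*} [DecidableEq X] {S : Finset X} {x : X} (hx : x ∈ S) (W : ℝ) :
    ∑ z ∈ S, (if z = x then W else (1:ℝ)) = W + ((S.card : ℝ) - 1) := by
  rw [← Finset.add_sum_erase _ _ hx, if_pos rfl,
    Finset.sum_congr rfl (fun z hz => if_neg (Finset.ne_of_mem_erase hz))]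
  simp [Finset.card_erase_of_mem hx,
    Nat.cast_sub (Finset.one_le_card.mpr ⟨x, hx⟩)]

lemma wsum_not_mem {X : Type*} [DecidableEq X] {S : Finset X} {x : X} (hx : x ∉ S) (W : ℝ) :
    ∑ z ∈ S, (if z = x then W else (1:ℝ)) = (S.card : ℝ) := by
  rw [Finset.sum_congr rfl (fun z hz => if_neg (by rintro rfl; exact hx hz))]
  simp

lemma num_mem {X : Type*} [Fintype X] [DecidableEq X] (s : X → X → ℝ) {S : Finset X}
    {x : X} (hx : x ∈ S) (W : ℝ) :
    ∑ u ∈ S, ∑ v ∈ Sᶜ, s u v * (if u = x then W else 1) * (if v = x then W else 1)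
      = W * (∑ v ∈ Sᶜ, s x v) + ∑ u ∈ S.erase x, ∑ v ∈ Sᶜ, s u v := by
  rw [← Finset.add_sum_erase _ _ hx]
  congr 1
  · rw [Finset.mul_sum]
    refine Finset.sum_congr rfl fun v hv => ?_
    have hvne : v ≠ x := fun h => (Finset.mem_compl.mp hv) (h ▸ hx)
    rw [if_pos rfl, if_neg hvne]; ring
  · refine Finset.sum_congr rfl fun u hu => Finset.sum_congr rfl fun v hv => ?_
    have hvne : v ≠ x := fun h => (Finset.mem_compl.mp hv) (h ▸ hx)
    rw [if_neg (Finset.ne_of_mem_erase hu), if_neg hvne]; ring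

lemma num_not_mem {X : Type*} [Fintype X] [DecidableEq X] (s : X → X → ℝ) {S : Finset X}
    {x : X} (hx : x ∉ S) (W : ℝ) :
    ∑ u ∈ S, ∑ v ∈ Sᶜ, s u v * (if u = x then W else 1) * (if v = x then W else 1)
      = W * (∑ u ∈ S, s u x) + ∑ u ∈ S, ∑ v ∈ Sᶜ.erase x, s u v := by
  have hxc : x ∈ Sᶜ := Finset.mem_compl.mpr hx
  rw [Finset.mul_sum, ← Finset.sum_add_distrib]
  refine Finset.sum_congr rfl fun u hu => ?_
  have hune : u ≠ x := fun h => hx (h ▸ hu)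
  rw [← Finset.add_sum_erase _ _ hxc]
  congr 1
  · rw [if_neg hune, if_pos rfl]; ring
  · refine Finset.sum_congr rfl fun v hv => ?_
    rw [if_neg hune, if_neg (Finset.ne_of_mem_erase hv)]; ring

lemma tendsto_linear_div (α β c : ℝ) :
    Tendsto (fun W : ℝ => (W * α + β) / (W + c)) atTop (nhds α) := by
  have h1 : Tendsto (fun W : ℝ => W + c) atTop atTop :=
    tendsto_atTop_add_const_right _ _ tendsto_id
  have h2 : Tendsto (fun W : ℝ => (β - α * c) / (W + c)) atTop (nhds 0) :=
    Filter.Tendsto.div_atTop tendsto_const_nhds h1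
  have h3 : Tendsto (fun W : ℝ => α + (β - α * c) / (W + c)) atTop (nhds (α + 0)) :=
    tendsto_const_nhds.add h2
  rw [add_zero] at h3
  refine Filter.Tendsto.congr' ?_ h3
  filter_upwards [Filter.eventually_gt_atTop (-c)] with W hW
  have hne : W + c ≠ 0 := by intro h; linarith
  field_simp
  ring
end AuxRcut

/-- if the between-cluster similarities are pairwise constant but non-uniform
(`a = λ_{ij} > λ_{il} = b`), then merging `Cl i` with `Cl j` and splitting `Cl l` into two
nonempty parts strictly decreases the ratio-cut cost once the weight `W` put on `x ∈ Cl i`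
is large enough. -/
theorem rcut_merge_split_improves
    {X : Type*} [Fintype X] [DecidableEq X]
    (s : X → X → ℝ) (hsym : ∀ x y, s x y = s y x) (hnn : ∀ x y, 0 ≤ s x y)
    (k : ℕ) (hk3 : 3 ≤ k) (hk2 : k < Fintype.card X)
    (Cl : Fin k → Finset X) (hCl : IsClusteringI Cl)
    (i j l : Fin k) (hij : i ≠ j) (hil : i ≠ l) (hjl : j ≠ l)
    (lam : Fin k → Fin k → ℝ)
    (hlam : ∀ p q : Fin k, p ≠ q → ∀ u ∈ Cl p, ∀ v ∈ Cl q, s u v = lam p q)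
    (a b : ℝ) (ha : lam i j = a) (hb : lam i l = b) (hab : b < a)
    (hl2 : 2 ≤ (Cl l).card)
    (x : X) (hx : x ∈ Cl i)
    (D₁ D₂ : Finset X) (hD₁ : D₁.Nonempty) (hD₂ : D₂.Nonempty)
    (hDdisj : Disjoint D₁ D₂) (hDun : D₁ ∪ D₂ = Cl l) :
    ∃ W₀ > (0 : ℝ), ∀ W ≥ W₀,
      rcutI (fun t => if t = i then Cl i ∪ Cl j else if t = j then D₁
                      else if t = l then D₂ else Cl t)
        (fun z => if z = x then W else 1) s
      < rcutI Cl (fun z => if z = x then W else 1) s := by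
  classical
  obtain ⟨hne, hdisj, -⟩ := hCl
  set Cl' : Fin k → Finset X := fun t => if t = i then Cl i ∪ Cl j else if t = j then D₁
                      else if t = l then D₂ else Cl t with hCl'
  -- basic membership facts
  have hxj : x ∉ Cl j := fun h => (Finset.disjoint_left.mp (hdisj i j hij)) hx h
  have hxl : x ∉ Cl l := fun h => (Finset.disjoint_left.mp (hdisj i l hil)) hx h
  have hD1l : D₁ ⊆ Cl l := hDun ▸ Finset.subset_union_left
  have hD2l : D₂ ⊆ Cl l := hDun ▸ Finset.subset_union_right
  have hxD1 : x ∉ D₁ := fun h => hxl (hD1l h)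
  have hxD2 : x ∉ D₂ := fun h => hxl (hD2l h)
  have hxU : x ∈ Cl i ∪ Cl j := Finset.mem_union_left _ hx
  -- similarity to x is constant on Cl j, Cl l
  have hsj : ∀ u ∈ Cl j, s u x = a := fun u hu => by
    rw [hsym, hlam i j hij x hx u hu, ha]
  have hsl : ∀ u ∈ Cl l, s u x = b := fun u hu => by
    rw [hsym, hlam i l hil x hx u hu, hb]
  -- cardinalities
  have hnj : (0:ℝ) < (Cl j).card := by exact_mod_cast Finset.card_pos.mpr (hne j)
  have hnl : (0:ℝ) < (Cl l).card := by exact_mod_cast Finset.card_pos.mpr (hne l)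
  have hn1 : (0:ℝ) < D₁.card := by exact_mod_cast Finset.card_pos.mpr hD₁
  have hn2 : (0:ℝ) < D₂.card := by exact_mod_cast Finset.card_pos.mpr hD₂
  -- a small algebraic helper is inlined below
  have lin_div : ∀ (n μ Bq W : ℝ), n ≠ 0 → (W * (n * μ) + Bq) / n = μ * W + Bq / n := by
    intro n μ Bq W hn; field_simp
  -- constant similarity sums
  have sumj : ∑ u ∈ Cl j, s u x = ((Cl j).card : ℝ) * a := by
    rw [Finset.sum_congr rfl hsj, Finset.sum_const, nsmul_eq_mul]
  have suml : ∑ u ∈ Cl l, s u x = ((Cl l).card : ℝ) * b := by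
    rw [Finset.sum_congr rfl hsl, Finset.sum_const, nsmul_eq_mul]
  have sum1 : ∑ u ∈ D₁, s u x = (D₁.card : ℝ) * b := by
    rw [Finset.sum_congr rfl (fun u hu => hsl u (hD1l hu)), Finset.sum_const, nsmul_eq_mul]
  have sum2 : ∑ u ∈ D₂, s u x = (D₂.card : ℝ) * b := by
    rw [Finset.sum_congr rfl (fun u hu => hsl u (hD2l hu)), Finset.sum_const, nsmul_eq_mul]
  -- the key exact formula for the rcut difference
  have key : ∃ A' B' cU A B cI K : ℝ, ∀ W : ℝ,
      rcutI Cl' (fun z => if z = x then W else 1) s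
        - rcutI Cl (fun z => if z = x then W else 1) s
      = ((b - a) / 2) * W
        + (1 / 2) * (((W * A' + B') / (W + cU) - (W * A + B) / (W + cI)) + K) := by
    refine ⟨∑ v ∈ (Cl i ∪ Cl j)ᶜ, s x v,
      ∑ u ∈ (Cl i ∪ Cl j).erase x, ∑ v ∈ (Cl i ∪ Cl j)ᶜ, s u v,
      (((Cl i ∪ Cl j).card : ℝ) - 1),
      ∑ v ∈ (Cl i)ᶜ, s x v,
      ∑ u ∈ (Cl i).erase x, ∑ v ∈ (Cl i)ᶜ, s u v,
      (((Cl i).card : ℝ) - 1),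
      (∑ u ∈ D₁, ∑ v ∈ D₁ᶜ.erase x, s u v) / (D₁.card : ℝ)
        + (∑ u ∈ D₂, ∑ v ∈ D₂ᶜ.erase x, s u v) / (D₂.card : ℝ)
        - (∑ u ∈ Cl j, ∑ v ∈ (Cl j)ᶜ.erase x, s u v) / ((Cl j).card : ℝ)
        - (∑ u ∈ Cl l, ∑ v ∈ (Cl l)ᶜ.erase x, s u v) / ((Cl l).card : ℝ),
      fun W => ?_⟩
    have hrc : ∀ (Cm : Fin k → Finset X),
        rcutI Cm (fun z => if z = x then W else 1) s
        = (1/2) * ∑ t, (∑ u ∈ Cm t, ∑ v ∈ (Cm t)ᶜ,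
            s u v * (if u = x then W else 1) * (if v = x then W else 1))
            / (∑ z ∈ Cm t, (if z = x then W else 1)) := fun Cm => rfl
    rw [hrc, hrc, ← mul_sub, ← Finset.sum_sub_distrib]
    have hzero : ∀ t ∈ (Finset.univ : Finset (Fin k)),
        t ∉ ({i, j, l} : Finset (Fin k)) →
        (∑ u ∈ Cl' t, ∑ v ∈ (Cl' t)ᶜ,
            s u v * (if u = x then W else 1) * (if v = x then W else 1))
            / (∑ z ∈ Cl' t, (if z = x then W else 1))
          - (∑ u ∈ Cl t, ∑ v ∈ (Cl t)ᶜ,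
            s u v * (if u = x then W else 1) * (if v = x then W else 1))
            / (∑ z ∈ Cl t, (if z = x then W else 1)) = 0 := by
      intro t _ ht
      simp only [Finset.mem_insert, Finset.mem_singleton, not_or] at ht
      have hee : Cl' t = Cl t := by
        simp only [hCl', if_neg ht.1, if_neg ht.2.1, if_neg ht.2.2]
      rw [hee, sub_self]
    rw [← Finset.sum_subset (Finset.subset_univ ({i, j, l} : Finset (Fin k))) hzero]
    rw [show ({i, j, l} : Finset (Fin k)) = insert i (insert j ({l} : Finset (Fin k))) from rfl,
      Finset.sum_insert (by simp [hij, hil]), Finset.sum_insert (by simp [hjl]),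
      Finset.sum_singleton]
    have e1 : Cl' i = Cl i ∪ Cl j := if_pos rfl
    have e2 : Cl' j = D₁ := by
      simp [hCl', Ne.symm hij]
    have e3 : Cl' l = D₂ := by
      simp [hCl', Ne.symm hil, Ne.symm hjl]
    rw [e1, e2, e3,
      num_mem s hxU W, wsum_mem hxU W,
      num_mem s hx W, wsum_mem hx W,
      num_not_mem s hxD1 W, wsum_not_mem hxD1 W,
      num_not_mem s hxD2 W, wsum_not_mem hxD2 W,
      num_not_mem s hxj W, wsum_not_mem hxj W,
      num_not_mem s hxl W, wsum_not_mem hxl W,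
      sumj, suml, sum1, sum2,
      lin_div _ _ _ _ hnj.ne', lin_div _ _ _ _ hnl.ne',
      lin_div _ _ _ _ hn1.ne', lin_div _ _ _ _ hn2.ne']
    ring
  obtain ⟨A', B', cU, A, B, cI, K, key⟩ := key
  -- asymptotics: the difference tends to -∞
  have hT : Tendsto (fun W : ℝ => (W * A' + B') / (W + cU) - (W * A + B) / (W + cI))
      atTop (nhds (A' - A)) := (tendsto_linear_div A' B' cU).sub (tendsto_linear_div A B cI)
  have hG : Tendsto (fun W : ℝ => (1 / 2) * (((W * A' + B') / (W + cU)
      - (W * A + B) / (W + cI)) + K)) atTop (nhds ((1 / 2) * ((A' - A) + K))) :=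
    tendsto_const_nhds.mul (hT.add tendsto_const_nhds)
  have hL : Tendsto (fun W : ℝ => ((b - a) / 2) * W) atTop atBot :=
    Filter.Tendsto.const_mul_atTop_of_neg (by linarith) tendsto_id
  have hFt : Tendsto (fun W : ℝ => ((b - a) / 2) * W + (1 / 2) * (((W * A' + B') / (W + cU)
      - (W * A + B) / (W + cI)) + K)) atTop atBot := hL.atBot_add hG
  have hev := hFt.eventually (Filter.eventually_lt_atBot (0 : ℝ))
  rw [Filter.eventually_atTop] at hev
  obtain ⟨M, hM⟩ := hev
  refine ⟨max M 1, lt_of_lt_of_le one_pos (le_max_right _ _), fun W hW => ?_⟩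
  have h2 : rcutI Cl' (fun z => if z = x then W else 1) s
      - rcutI Cl (fun z => if z = x then W else 1) s < 0 := by
    rw [key W]
    exact hM W (le_trans (le_max_left _ _) hW)
  linarith
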